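/- arXiv:2501.02492 — 5 statements merged into one kernel-verified Lean document; each statement's English description precedes it below -/
import Mathlib

section
/- The center of the Lie algebra V^σ[G], i.e. {x ∈ V^σ[G] : [x,y]=0 for all y}, equals Vg_0 = {r g_0 : r ∈ V}, and has dimension 4 over F. -/
namespace GGA

noncomputable section

variable (F : Type*) [Field F]

/-- The labelling `g_0, …, g_7` of the eight elements of `G = (ℤ/2ℤ)³`:
`g_0=(0,0,0), g_1=(1,0,0), g_2=(0,1,0), g_3=(0,0,1), g_4=(1,1,0), g_5=(0,1,1),
g_6=(1,1,1), g_7=(1,0,1)`. -/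
def lab : Fin 8 → Fin 3 → ZMod 2 :=
  ![![0, 0, 0], ![1, 0, 0], ![0, 1, 0], ![0, 0, 1],
    ![1, 1, 0], ![0, 1, 1], ![1, 1, 1], ![1, 0, 1]]

/-- `star i j` is the unique index `k ∈ {0,…,7}` with `g_i + g_j = g_k`
(the labelling `lab` is a bijection). -/
def star (i j : Fin 8) : Fin 8 := Function.invFun lab (lab i + lab j)

/-- The formula for `σ_{i,i+1}(r,s)`. -/
def f1 (r s : Fin 4 → F) : Fin 4 → F :=
  ![-(r 1 * s 0) - r 2 * s 2, -(r 1 * s 2) - r 2 * s 0,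
    r 0 * s 1 + r 3 * s 3, r 0 * s 3 + r 3 * s 1]

/-- The formula for `σ_{i,i+2}(r,s)`. -/
def f2 (r s : Fin 4 → F) : Fin 4 → F :=
  ![r 1 * s 2 + r 3 * s 3, -(r 0 * s 0) - r 2 * s 1,
    -(r 0 * s 1) - r 2 * s 0, r 1 * s 3 + r 3 * s 2]

/-- The formula for `σ_{i,i+4}(r,s)`. -/
def f4 (r s : Fin 4 → F) : Fin 4 → F :=
  ![-(r 0 * s 1) - r 1 * s 2, r 2 * s 0 + r 3 * s 3,
    -(r 0 * s 2) - r 1 * s 1, r 2 * s 3 + r 3 * s 0]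

/-- The twist `σ : G × G → Bil(V × V, V)`, `V = F⁴`, written in terms of the indices:
`σ i j r s = σ_{i,j}(r,s)`.  For `i, j ∈ I = {1,…,7}` the value depends on the
difference `j - i (mod 7)`, matching the definition
`σ_{i,i+1}, σ_{i,i+2}, σ_{i,i+4}` explicit, `σ_{0,i}=σ_{i,0}=σ_{0,0}=σ_{i,i}=0`,
`σ_{i,i+3}(r,s)=-σ_{i,i+4}(s,r)`, `σ_{i,i+5}(r,s)=-σ_{i,i+2}(s,r)`,
`σ_{i,i+6}(r,s)=-σ_{i,i+1}(s,r)`. -/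
def sigma (i j : Fin 8) (r s : Fin 4 → F) : Fin 4 → F :=
  if i = 0 ∨ j = 0 ∨ i = j then 0
  else if ((j : ℕ) + 7 - (i : ℕ)) % 7 = 1 then f1 F r s
  else if ((j : ℕ) + 7 - (i : ℕ)) % 7 = 2 then f2 F r s
  else if ((j : ℕ) + 7 - (i : ℕ)) % 7 = 3 then -f4 F s r
  else if ((j : ℕ) + 7 - (i : ℕ)) % 7 = 4 then f4 F r s
  else if ((j : ℕ) + 7 - (i : ℕ)) % 7 = 5 then -f2 F s r
  else -f1 F s r

/-- `single i r` is the formal sum `r gᵢ` in `V^σ[G]`, viewed as a function `G → V`. -/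
def single (i : Fin 8) (r : Fin 4 → F) : Fin 8 → Fin 4 → F :=
  fun k => if k = i then r else 0

/-- The product of `V^σ[G]`: the unique bilinear extension of
`[r gᵢ, s gⱼ] = σ_{i,j}(r,s) g_{i*j}`. -/
def bracket (x y : Fin 8 → Fin 4 → F) : Fin 8 → Fin 4 → F :=
  fun k => ∑ i : Fin 8, ∑ j : Fin 8, if star i j = k then sigma F i j (x i) (y j) else 0


lemma lab_inj : Function.Injective lab := by decide

lemma lab_surj : Function.Surjective lab :=
  ((Fintype.bijective_iff_injective_and_card lab).mpr ⟨lab_inj, by decide⟩).2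

lemma lab_star (i j : Fin 8) : lab (star i j) = lab i + lab j :=
  Function.rightInverse_invFun lab_surj _

lemma star_star (i j : Fin 8) : star (star i j) j = i := by
  apply lab_inj
  rw [lab_star, lab_star, add_assoc, show lab j + lab j = 0 by revert j; decide, add_zero]

lemma f1_zero_left (s : Fin 4 → F) : f1 F 0 s = 0 := by
  funext c; fin_cases c <;> simp [f1]

lemma f1_zero_right (r : Fin 4 → F) : f1 F r 0 = 0 := by
  funext c; fin_cases c <;> simp [f1]

lemma f2_zero_left (s : Fin 4 → F) : f2 F 0 s = 0 := by
  funext c; fin_cases c <;> simp [f2]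

lemma f2_zero_right (r : Fin 4 → F) : f2 F r 0 = 0 := by
  funext c; fin_cases c <;> simp [f2]

lemma f4_zero_left (s : Fin 4 → F) : f4 F 0 s = 0 := by
  funext c; fin_cases c <;> simp [f4]

lemma f4_zero_right (r : Fin 4 → F) : f4 F r 0 = 0 := by
  funext c; fin_cases c <;> simp [f4]

lemma sigma_zero_left (i j : Fin 8) (s : Fin 4 → F) : sigma F i j 0 s = 0 := by
  unfold sigma
  split_ifs <;>
    simp [f1_zero_left, f2_zero_left, f4_zero_left, f1_zero_right, f2_zero_right, f4_zero_right]

lemma sigma_zero_right (i j : Fin 8) (r : Fin 4 → F) : sigma F i j r 0 = 0 := by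
  unfold sigma
  split_ifs <;>
    simp [f1_zero_left, f2_zero_left, f4_zero_left, f1_zero_right, f2_zero_right, f4_zero_right]

lemma bracket_single (x : Fin 8 → Fin 4 → F) (j : Fin 8) (s : Fin 4 → F) (k : Fin 8) :
    bracket F x (single F j s) k = sigma F (star k j) j (x (star k j)) s := by
  unfold bracket
  have h1 : ∀ i : Fin 8,
      (∑ j' : Fin 8, if star i j' = k then sigma F i j' (x i) (single F j s j') else 0)
        = if star i j = k then sigma F i j (x i) s else 0 := by
    intro i
    rw [Finset.sum_eq_single j]
    · simp [single]
    · intro j' _ hj'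
      simp [single, if_neg hj', sigma_zero_right]
    · simp
  simp only [h1]
  rw [Finset.sum_eq_single (star k j)]
  · rw [if_pos (star_star k j)]
  · intro i _ hi
    rw [if_neg]
    intro h
    exact hi (by rw [← h, star_star])
  · simp

lemma eq_zero_of_f1 (r : Fin 4 → F) (h0 : f1 F r ![1,0,0,0] = 0) (h1 : f1 F r ![0,1,0,0] = 0) :
    r = 0 := by
  have a0 := congrFun h0 0
  have a1 := congrFun h0 1
  have a2 := congrFun h1 2
  have a3 := congrFun h1 3
  simp [f1] at a0 a1 a2 a3
  funext c
  fin_cases c <;> simpa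


/-- The center of the Lie algebra `V^σ[G]` equals
`Vg₀ = {r g₀ : r ∈ V}` and has dimension `4` over `F`. -/
theorem center_of_d4_gga :
    {x : Fin 8 → Fin 4 → F | ∀ y, bracket F x y = 0}
      = {x : Fin 8 → Fin 4 → F | ∃ r : Fin 4 → F, x = single F 0 r} ∧
    Module.finrank F
      ↥(Submodule.span F {x : Fin 8 → Fin 4 → F | ∃ r : Fin 4 → F, x = single F 0 r}) = 4 := by
  constructor
  · ext x
    simp only [Set.mem_setOf_eq]
    constructor
    · intro hx
      have hσ : ∀ i j : Fin 8, ∀ s : Fin 4 → F, sigma F i j (x i) s = 0 := by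
        intro i j s
        have h := congrFun (hx (single F j s)) (star i j)
        rw [bracket_single, star_star] at h
        exact h
      refine ⟨x 0, ?_⟩
      funext k
      have key : ∀ i j : Fin 8, sigma F i j (x i) = f1 F (x i) → x i = 0 := by
        intro i j h
        exact eq_zero_of_f1 F (x i)
          (by rw [← congrFun h ![1,0,0,0]]; exact hσ i j _)
          (by rw [← congrFun h ![0,1,0,0]]; exact hσ i j _)
      fin_cases k
      · simp [single]
      · simp [single]; exact key 1 2 rfl
      · simp [single]; exact key 2 3 rfl
      · simp [single]; exact key 3 4 rfl
      · simp [single]; exact key 4 5 rfl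
      · simp [single]; exact key 5 6 rfl
      · simp [single]; exact key 6 7 rfl
      · simp [single]; exact key 7 1 rfl
    · rintro ⟨r, rfl⟩ y
      funext k
      show (∑ i : Fin 8, ∑ j : Fin 8,
        if star i j = k then sigma F i j (single F 0 r i) (y j) else 0) = 0
      apply Finset.sum_eq_zero
      intro i _
      apply Finset.sum_eq_zero
      intro j _
      rcases eq_or_ne i 0 with rfl | hi
      · have : sigma F 0 j (single F 0 r 0) (y j) = 0 := by simp [sigma]
        simp [this]
      · have : single F 0 r i = 0 := if_neg hi
        rw [this, sigma_zero_left]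
        simp
  · have hset : {x : Fin 8 → Fin 4 → F | ∃ r : Fin 4 → F, x = single F 0 r}
        = Set.range (LinearMap.single F (fun _ : Fin 8 => Fin 4 → F) 0) := by
      ext x
      simp only [Set.mem_setOf_eq, Set.mem_range, LinearMap.single_apply]
      constructor
      · rintro ⟨r, rfl⟩
        exact ⟨r, by funext k; simp [single, Pi.single_apply]⟩
      · rintro ⟨r, rfl⟩
        exact ⟨r, by funext k; simp [single, Pi.single_apply]⟩
    rw [hset, ← LinearMap.coe_range, Submodule.span_eq,
      (LinearMap.single F (fun _ : Fin 8 => Fin 4 → F) 0).finrank_range_of_inj (fun _ _ h => Pi.single_injective (0 : Fin 8) h)]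
    simp


end
end GGA
end

section
/- Assume char F ≠ 2. The three linear maps ρ_1, ρ_2, ρ_3 from the Lie algebra V^σ[G^×] = span{r g_i : r ∈ V, i ∈ I} to gl(F^8), defined by ρ_1((a,b,c,d)g_i) = δ(i)_{(a,b,c,d)}, ρ_2((a,b,c,d)g_i) = δ(i)_{((a−b−c+d)/2, (−a+b−c+d)/2, (−a−b+c+d)/2, (a+b+c+d)/2)}, and ρ_3((a,b,c,d)g_i) = δ(i)_{((a−b−c−d)/2, (−a+b−c−d)/2, (−a−b+c−d)/2, (−a−b−c+d)/2)}, are Lie algebra homomorphisms: ρ_k([x,y]) = ρ_k(x)∘ρ_k(y) − ρ_k(y)∘ρ_k(x) for all x, y ∈ V^σ[G^×] and k = 1, 2, 3. -/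
namespace GGA

noncomputable section

variable (F : Type*) [Field F]

/-- Index shifting: for `i ∈ I = {1,…,7}`, `sh i t` is the index `i+t`, taken modulo 7
so as to stay in `I`. -/
def sh (i : Fin 8) (t : ℕ) : Fin 8 := ⟨((i : ℕ) - 1 + t) % 7 + 1, by omega⟩

/-- The canonical basis vector `eₖ` of `F⁸`. -/
def e (k : Fin 8) : Fin 8 → F := Pi.single k 1

/-- The map `δ(i)_{(a,b,c,d)} : F⁸ → F⁸` given by
`e_{i+1} ↦ a e_{i+3}, e_{i+3} ↦ −a e_{i+1}, e_{i+2} ↦ b e_{i+6}, e_{i+6} ↦ −b e_{i+2},`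
`e_{i+4} ↦ c e_{i+5}, e_{i+5} ↦ −c e_{i+4}, e₀ ↦ d eᵢ, eᵢ ↦ −d e₀`. -/
def delta (i : Fin 8) (v : Fin 4 → F) (z : Fin 8 → F) : Fin 8 → F :=
  ((v 0 * z (sh i 1)) • e F (sh i 3) - (v 0 * z (sh i 3)) • e F (sh i 1))
    + ((v 1 * z (sh i 2)) • e F (sh i 6) - (v 1 * z (sh i 6)) • e F (sh i 2))
    + ((v 2 * z (sh i 4)) • e F (sh i 5) - (v 2 * z (sh i 5)) • e F (sh i 4))
    + ((v 3 * z 0) • e F i - (v 3 * z i) • e F 0)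

/-- The natural representation `ρ₁` of `V^σ[G^×]`, `ρ₁((a,b,c,d)gᵢ) = δ(i)_{(a,b,c,d)}`,
extended linearly. -/
def rho1 (x : Fin 8 → Fin 4 → F) (z : Fin 8 → F) : Fin 8 → F :=
  ∑ i : Fin 8, if i = 0 then 0 else delta F i (x i) z

/-- The half-spin representation `ρ₂` of `V^σ[G^×]`,
`ρ₂((a,b,c,d)gᵢ) = δ(i)_{((a−b−c+d)/2, (−a+b−c+d)/2, (−a−b+c+d)/2, (a+b+c+d)/2)}`. -/
def rho2 (x : Fin 8 → Fin 4 → F) (z : Fin 8 → F) : Fin 8 → F :=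
  ∑ i : Fin 8, if i = 0 then 0 else
    delta F i
      ![(x i 0 - x i 1 - x i 2 + x i 3) / 2, (-x i 0 + x i 1 - x i 2 + x i 3) / 2,
        (-x i 0 - x i 1 + x i 2 + x i 3) / 2, (x i 0 + x i 1 + x i 2 + x i 3) / 2] z

/-- The half-spin representation `ρ₃` of `V^σ[G^×]`,
`ρ₃((a,b,c,d)gᵢ) = δ(i)_{((a−b−c−d)/2, (−a+b−c−d)/2, (−a−b+c−d)/2, (−a−b−c+d)/2)}`. -/
def rho3 (x : Fin 8 → Fin 4 → F) (z : Fin 8 → F) : Fin 8 → F :=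
  ∑ i : Fin 8, if i = 0 then 0 else
    delta F i
      ![(x i 0 - x i 1 - x i 2 - x i 3) / 2, (-x i 0 + x i 1 - x i 2 - x i 3) / 2,
        (-x i 0 - x i 1 + x i 2 - x i 3) / 2, (-x i 0 - x i 1 - x i 2 + x i 3) / 2] z

/-- The subspace `V^σ[G^×]` of `V^σ[G]` spanned by `{r gᵢ : r ∈ V, i ∈ I}`. -/
def VGx : Submodule F (Fin 8 → Fin 4 → F) :=
  Submodule.span F {z : Fin 8 → Fin 4 → F | ∃ i : Fin 8, i ≠ 0 ∧ ∃ r : Fin 4 → F, z = single F i r}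


def tbl : Fin 8 → Fin 8 → Fin 8 :=
  ![![0, 1, 2, 3, 4, 5, 6, 7],
    ![1, 0, 4, 7, 2, 6, 5, 3],
    ![2, 4, 0, 5, 1, 3, 7, 6],
    ![3, 7, 5, 0, 6, 2, 4, 1],
    ![4, 2, 1, 6, 0, 7, 3, 5],
    ![5, 6, 3, 2, 7, 0, 1, 4],
    ![6, 5, 7, 4, 3, 1, 0, 2],
    ![7, 3, 6, 1, 5, 4, 2, 0]]

lemma star_eq (i j : Fin 8) : star i j = tbl i j := by
  have h : lab i + lab j = lab (tbl i j) := by revert i j; decide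
  rw [star, h]
  exact Function.leftInverse_invFun lab_inj _

lemma sh_1_1 : sh 1 1 = 2 := by decide
lemma sh_1_2 : sh 1 2 = 3 := by decide
lemma sh_1_3 : sh 1 3 = 4 := by decide
lemma sh_1_4 : sh 1 4 = 5 := by decide
lemma sh_1_5 : sh 1 5 = 6 := by decide
lemma sh_1_6 : sh 1 6 = 7 := by decide
lemma sh_2_1 : sh 2 1 = 3 := by decide
lemma sh_2_2 : sh 2 2 = 4 := by decide
lemma sh_2_3 : sh 2 3 = 5 := by decide
lemma sh_2_4 : sh 2 4 = 6 := by decide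
lemma sh_2_5 : sh 2 5 = 7 := by decide
lemma sh_2_6 : sh 2 6 = 1 := by decide
lemma sh_3_1 : sh 3 1 = 4 := by decide
lemma sh_3_2 : sh 3 2 = 5 := by decide
lemma sh_3_3 : sh 3 3 = 6 := by decide
lemma sh_3_4 : sh 3 4 = 7 := by decide
lemma sh_3_5 : sh 3 5 = 1 := by decide
lemma sh_3_6 : sh 3 6 = 2 := by decide
lemma sh_4_1 : sh 4 1 = 5 := by decide
lemma sh_4_2 : sh 4 2 = 6 := by decide
lemma sh_4_3 : sh 4 3 = 7 := by decide
lemma sh_4_4 : sh 4 4 = 1 := by decide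
lemma sh_4_5 : sh 4 5 = 2 := by decide
lemma sh_4_6 : sh 4 6 = 3 := by decide
lemma sh_5_1 : sh 5 1 = 6 := by decide
lemma sh_5_2 : sh 5 2 = 7 := by decide
lemma sh_5_3 : sh 5 3 = 1 := by decide
lemma sh_5_4 : sh 5 4 = 2 := by decide
lemma sh_5_5 : sh 5 5 = 3 := by decide
lemma sh_5_6 : sh 5 6 = 4 := by decide
lemma sh_6_1 : sh 6 1 = 7 := by decide
lemma sh_6_2 : sh 6 2 = 1 := by decide
lemma sh_6_3 : sh 6 3 = 2 := by decide
lemma sh_6_4 : sh 6 4 = 3 := by decide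
lemma sh_6_5 : sh 6 5 = 4 := by decide
lemma sh_6_6 : sh 6 6 = 5 := by decide
lemma sh_7_1 : sh 7 1 = 1 := by decide
lemma sh_7_2 : sh 7 2 = 2 := by decide
lemma sh_7_3 : sh 7 3 = 3 := by decide
lemma sh_7_4 : sh 7 4 = 4 := by decide
lemma sh_7_5 : sh 7 5 = 5 := by decide
lemma sh_7_6 : sh 7 6 = 6 := by decide

set_option maxHeartbeats 4000000 in
lemma key1 (x y : Fin 8 → Fin 4 → F) (z : Fin 8 → F) :
    rho1 F (bracket F x y) z = rho1 F x (rho1 F y z) - rho1 F y (rho1 F x z) := by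
  funext k
  simp (config := { decide := true }) only [rho1, bracket, star_eq, tbl, sigma, f1, f2, f4,
    delta, e, sh_1_1, sh_1_2, sh_1_3, sh_1_4, sh_1_5, sh_1_6, sh_2_1, sh_2_2, sh_2_3, sh_2_4, sh_2_5, sh_2_6, sh_3_1, sh_3_2, sh_3_3, sh_3_4, sh_3_5, sh_3_6, sh_4_1, sh_4_2, sh_4_3, sh_4_4, sh_4_5, sh_4_6, sh_5_1, sh_5_2, sh_5_3, sh_5_4, sh_5_5, sh_5_6, sh_6_1, sh_6_2, sh_6_3, sh_6_4, sh_6_5, sh_6_6, sh_7_1, sh_7_2, sh_7_3, sh_7_4, sh_7_5, sh_7_6,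
    Fin.sum_univ_eight, Finset.sum_apply, ite_apply, Pi.sub_apply, Pi.add_apply, Pi.smul_apply,
    Pi.neg_apply, Pi.zero_apply, Pi.single_apply, smul_eq_mul, Matrix.cons_val_zero,
    Matrix.cons_val_one, Matrix.head_cons, Matrix.cons_val_two, Matrix.tail_cons,
    Matrix.cons_val_three, Matrix.cons_val_four, Matrix.cons_val', Matrix.cons_val_fin_one,
    Matrix.empty_val', Matrix.head_fin_const, if_true, if_false, mul_zero, zero_mul, add_zero,
    zero_add, neg_zero, mul_one, one_mul, sub_zero, zero_sub, smul_zero]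
  ring

/-- The linear transformation for `ρ₂`. -/
def T2v (v : Fin 4 → F) : Fin 4 → F :=
  ![(v 0 - v 1 - v 2 + v 3) / 2, (-v 0 + v 1 - v 2 + v 3) / 2,
    (-v 0 - v 1 + v 2 + v 3) / 2, (v 0 + v 1 + v 2 + v 3) / 2]

/-- The linear transformation for `ρ₃`. -/
def T3v (v : Fin 4 → F) : Fin 4 → F :=
  ![(v 0 - v 1 - v 2 - v 3) / 2, (-v 0 + v 1 - v 2 - v 3) / 2,
    (-v 0 - v 1 + v 2 - v 3) / 2, (-v 0 - v 1 - v 2 + v 3) / 2]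

lemma T2v_zero : T2v F 0 = 0 := by
  funext c; fin_cases c <;> simp [T2v]

lemma T3v_zero : T3v F 0 = 0 := by
  funext c; fin_cases c <;> simp [T3v]

lemma T2v_add (v w : Fin 4 → F) : T2v F (v + w) = T2v F v + T2v F w := by
  funext c; fin_cases c <;> (simp [T2v]; ring)

lemma T3v_add (v w : Fin 4 → F) : T3v F (v + w) = T3v F v + T3v F w := by
  funext c; fin_cases c <;> (simp [T3v]; ring)

/-- `T2v` as an additive monoid hom. -/
def T2hom : (Fin 4 → F) →+ (Fin 4 → F) :=
  { toFun := T2v F, map_zero' := T2v_zero F, map_add' := T2v_add F }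

/-- `T3v` as an additive monoid hom. -/
def T3hom : (Fin 4 → F) →+ (Fin 4 → F) :=
  { toFun := T3v F, map_zero' := T3v_zero F, map_add' := T3v_add F }

set_option maxHeartbeats 2000000 in
lemma sigma_T2 (h2 : (2 : F) ≠ 0) (i j : Fin 8) (r s : Fin 4 → F) :
    sigma F i j (T2v F r) (T2v F s) = T2v F (sigma F i j r s) := by
  unfold sigma
  split_ifs <;> funext c <;> fin_cases c <;>
    simp only [T2v, f1, f2, f4, Pi.neg_apply, Pi.zero_apply, Matrix.cons_val_zero,
      Matrix.cons_val_one, Matrix.head_cons, Matrix.cons_val_two, Matrix.tail_cons,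
      Matrix.cons_val_three, Fin.isValue, neg_zero, add_zero, sub_zero, zero_sub,
      zero_add, zero_div, neg_neg, Fin.reduceFinMk, Matrix.cons_val] <;>
    field_simp <;> ring

set_option maxHeartbeats 2000000 in
lemma sigma_T3 (h2 : (2 : F) ≠ 0) (i j : Fin 8) (r s : Fin 4 → F) :
    sigma F i j (T3v F r) (T3v F s) = T3v F (sigma F i j r s) := by
  unfold sigma
  split_ifs <;> funext c <;> fin_cases c <;>
    simp only [T3v, f1, f2, f4, Pi.neg_apply, Pi.zero_apply, Matrix.cons_val_zero,
      Matrix.cons_val_one, Matrix.head_cons, Matrix.cons_val_two, Matrix.tail_cons,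
      Matrix.cons_val_three, Fin.isValue, neg_zero, add_zero, sub_zero, zero_sub,
      zero_add, zero_div, neg_neg, Fin.reduceFinMk, Matrix.cons_val] <;>
    field_simp <;> ring

lemma bracket_T2 (h2 : (2 : F) ≠ 0) (x y : Fin 8 → Fin 4 → F) :
    bracket F (fun i => T2v F (x i)) (fun j => T2v F (y j))
      = fun k => T2v F (bracket F x y k) := by
  funext k
  simp only [bracket]
  rw [show T2v F = ⇑(T2hom F) from rfl, map_sum]
  refine Finset.sum_congr rfl fun i _ => ?_
  rw [map_sum]
  refine Finset.sum_congr rfl fun j _ => ?_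
  by_cases h : star i j = k
  · rw [if_pos h, if_pos h]
    exact sigma_T2 F h2 i j (x i) (y j)
  · rw [if_neg h, if_neg h]
    exact (map_zero (T2hom F)).symm

lemma bracket_T3 (h2 : (2 : F) ≠ 0) (x y : Fin 8 → Fin 4 → F) :
    bracket F (fun i => T3v F (x i)) (fun j => T3v F (y j))
      = fun k => T3v F (bracket F x y k) := by
  funext k
  simp only [bracket]
  rw [show T3v F = ⇑(T3hom F) from rfl, map_sum]
  refine Finset.sum_congr rfl fun i _ => ?_
  rw [map_sum]
  refine Finset.sum_congr rfl fun j _ => ?_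
  by_cases h : star i j = k
  · rw [if_pos h, if_pos h]
    exact sigma_T3 F h2 i j (x i) (y j)
  · rw [if_neg h, if_neg h]
    exact (map_zero (T3hom F)).symm

lemma rho2_eq (x : Fin 8 → Fin 4 → F) : rho2 F x = rho1 F (fun i => T2v F (x i)) := rfl

lemma rho3_eq (x : Fin 8 → Fin 4 → F) : rho3 F x = rho1 F (fun i => T3v F (x i)) := rfl

lemma key2 (h2 : (2 : F) ≠ 0) (x y : Fin 8 → Fin 4 → F) (z : Fin 8 → F) :
    rho2 F (bracket F x y) z = rho2 F x (rho2 F y z) - rho2 F y (rho2 F x z) := by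
  simp only [rho2_eq]
  rw [← bracket_T2 F h2 x y]
  exact key1 F _ _ z

lemma key3 (h2 : (2 : F) ≠ 0) (x y : Fin 8 → Fin 4 → F) (z : Fin 8 → F) :
    rho3 F (bracket F x y) z = rho3 F x (rho3 F y z) - rho3 F y (rho3 F x z) := by
  simp only [rho3_eq]
  rw [← bracket_T3 F h2 x y]
  exact key1 F _ _ z

/-- **Statement 11.** (char F ≠ 2.) `ρ₁, ρ₂, ρ₃` are Lie algebra homomorphisms from
`V^σ[G^×]` to `gl(F⁸)`. -/
theorem rho_are_lie_homs (h2 : (2 : F) ≠ 0) :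
    (∀ x ∈ VGx F, ∀ y ∈ VGx F,
      rho1 F (bracket F x y) = rho1 F x ∘ rho1 F y - rho1 F y ∘ rho1 F x) ∧
    (∀ x ∈ VGx F, ∀ y ∈ VGx F,
      rho2 F (bracket F x y) = rho2 F x ∘ rho2 F y - rho2 F y ∘ rho2 F x) ∧
    (∀ x ∈ VGx F, ∀ y ∈ VGx F,
      rho3 F (bracket F x y) = rho3 F x ∘ rho3 F y - rho3 F y ∘ rho3 F x) := by
  refine ⟨?_, ?_, ?_⟩ <;> intro x _ y _ <;> funext z
  · exact key1 F x y z
  · exact key2 F h2 x y z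
  · exact key3 F h2 x y z

end
end GGA
end

section
/- Assume F is algebraically closed of characteristic 0. The three F^8-modules over the Lie algebra V^σ[G^×] given by the Lie algebra homomorphisms ρ_1, ρ_2, ρ_3 are irreducible (the only submodules are 0 and F^8) and pairwise non-equivalent: for k ≠ l there is no linear isomorphism T: F^8 → F^8 with T ∘ ρ_k(x) = ρ_l(x) ∘ T for all x ∈ V^σ[G^×]. -/
namespace GGA

noncomputable section

variable (F : Type*) [Field F]

/-- The family `(ρ₁, ρ₂, ρ₃)`. -/
def rhoFam : Fin 3 → (Fin 8 → Fin 4 → F) → (Fin 8 → F) → (Fin 8 → F) :=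
  ![rho1 F, rho2 F, rho3 F]

section Aux
variable {F : Type*} [Field F]

lemma e_apply (k p : Fin 8) : e F k p = if p = k then 1 else 0 := by
  simp [e, Pi.single_apply]

lemma single_mem (i : Fin 8) (hi : i ≠ 0) (r : Fin 4 → F) : single F i r ∈ VGx F :=
  Submodule.subset_span ⟨i, hi, r, rfl⟩

lemma delta_zero_v (i : Fin 8) (z : Fin 8 → F) : delta F i 0 z = 0 := by
  simp [delta]

lemma rho1_single (i : Fin 8) (hi : i ≠ 0) (v : Fin 4 → F) :
    rho1 F (single F i v) = delta F i v := by
  funext z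
  rw [rho1, Finset.sum_eq_single i]
  · simp [single, hi]
  · intro j _ hj
    simp [single, hj, delta_zero_v]
  · simp

end Aux
section Aux2
variable {F : Type*} [Field F]

/-- The involution corresponding to `ρ₂`. -/
def c2 (v : Fin 4 → F) : Fin 4 → F :=
  ![(v 0 - v 1 - v 2 + v 3) / 2, (-v 0 + v 1 - v 2 + v 3) / 2,
    (-v 0 - v 1 + v 2 + v 3) / 2, (v 0 + v 1 + v 2 + v 3) / 2]

/-- The involution corresponding to `ρ₃`. -/
def c3 (v : Fin 4 → F) : Fin 4 → F :=
  ![(v 0 - v 1 - v 2 - v 3) / 2, (-v 0 + v 1 - v 2 - v 3) / 2,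
    (-v 0 - v 1 + v 2 - v 3) / 2, (-v 0 - v 1 - v 2 + v 3) / 2]

lemma rho2_single (i : Fin 8) (hi : i ≠ 0) (v : Fin 4 → F) :
    rho2 F (single F i v) = delta F i (c2 v) := by
  funext z
  rw [rho2, Finset.sum_eq_single i]
  · simp [single, hi, c2]
  · intro j _ hj
    have : single F i v j = 0 := by simp [single, hj]
    rw [this]
    norm_num [delta, Matrix.cons_val_two, Matrix.cons_val_three]
  · simp

lemma rho3_single (i : Fin 8) (hi : i ≠ 0) (v : Fin 4 → F) :
    rho3 F (single F i v) = delta F i (c3 v) := by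
  funext z
  rw [rho3, Finset.sum_eq_single i]
  · simp [single, hi, c3]
  · intro j _ hj
    have : single F i v j = 0 := by simp [single, hj]
    rw [this]
    norm_num [delta, Matrix.cons_val_two, Matrix.cons_val_three]
  · simp

lemma c2_c2 [CharZero F] (v : Fin 4 → F) : c2 (c2 v) = v := by
  funext j
  fin_cases j <;> (simp [c2]; ring_nf)

lemma c3_c3 [CharZero F] (v : Fin 4 → F) : c3 (c3 v) = v := by
  funext j
  fin_cases j <;> (simp [c3]; ring_nf)

end Aux2
section Aux3
variable {F : Type*} [Field F]

/-- First index of the pair rotated by slot `m` of `δ(i)`. -/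
def PP (i : Fin 8) (m : Fin 4) : Fin 8 := ![sh i 1, sh i 2, sh i 4, 0] m

/-- Second index of the pair rotated by slot `m` of `δ(i)`. -/
def QQ (i : Fin 8) (m : Fin 4) : Fin 8 := ![sh i 3, sh i 6, sh i 5, i] m

lemma delta_single_slot (i : Fin 8) (m : Fin 4) (c : F) (z : Fin 8 → F) :
    delta F i (Pi.single m c) z
      = (c * z (PP i m)) • e F (QQ i m) - (c * z (QQ i m)) • e F (PP i m) := by
  fin_cases m <;> simp [delta, PP, QQ, Pi.single_apply]

lemma cover : ∀ p q : Fin 8, p ≠ q →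
    ∃ i : Fin 8, ∃ m : Fin 4, i ≠ 0 ∧
      ((PP i m = p ∧ QQ i m = q) ∨ (PP i m = q ∧ QQ i m = p)) := by decide

end Aux3
section Aux4
variable {F : Type*} [Field F] [CharZero F]

lemma rhoFam0 : rhoFam F 0 = rho1 F := rfl
lemma rhoFam1 : rhoFam F 1 = rho2 F := rfl
lemma rhoFam2 : rhoFam F 2 = rho3 F := rfl

lemma realize (k : Fin 3) (i : Fin 8) (hi : i ≠ 0) (m : Fin 4) (c : F) :
    ∃ x ∈ VGx F, ∀ z : Fin 8 → F,
      rhoFam F k x z = (c * z (PP i m)) • e F (QQ i m) - (c * z (QQ i m)) • e F (PP i m) := by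
  fin_cases k
  · exact ⟨single F i (Pi.single m c), single_mem i hi _, fun z => by
      rw [show (⟨0, by norm_num⟩ : Fin 3) = 0 from rfl, rhoFam0,
        rho1_single i hi, delta_single_slot]⟩
  · exact ⟨single F i (c2 (Pi.single m c)), single_mem i hi _, fun z => by
      rw [show (⟨1, by norm_num⟩ : Fin 3) = 1 from rfl, rhoFam1,
        rho2_single i hi, c2_c2, delta_single_slot]⟩
  · exact ⟨single F i (c3 (Pi.single m c)), single_mem i hi _, fun z => by
      rw [show (⟨2, by norm_num⟩ : Fin 3) = 2 from rfl, rhoFam2,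
        rho3_single i hi, c3_c3, delta_single_slot]⟩

end Aux4
section Aux5
variable {F : Type*} [Field F] [CharZero F]

lemma exists_third : ∀ p q : Fin 8, ∃ j : Fin 8, j ≠ p ∧ j ≠ q := by decide

lemma irred (k : Fin 3) (U : Submodule F (Fin 8 → F))
    (hU : ∀ x ∈ VGx F, ∀ u ∈ U, rhoFam F k x u ∈ U) : U = ⊥ ∨ U = ⊤ := by
  by_cases hbot : U = ⊥
  · exact Or.inl hbot
  right
  obtain ⟨u, huU, hune⟩ := (Submodule.ne_bot_iff U).mp hbot
  have step : ∀ w ∈ U, ∀ p q : Fin 8, p ≠ q → w p • e F q - w q • e F p ∈ U := by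
    intro w hw p q hpq
    obtain ⟨i, m, hi, hc⟩ := cover p q hpq
    obtain ⟨x, hx, hxz⟩ := realize k i hi m (1 : F)
    have hm := hU x hx w hw
    rw [hxz w] at hm
    rcases hc with ⟨h1, h2⟩ | ⟨h1, h2⟩
    · rw [h1, h2] at hm; simpa using hm
    · rw [h1, h2] at hm
      have := U.neg_mem hm
      simpa [neg_sub] using this
  obtain ⟨m0, hm0⟩ : ∃ m0, u m0 ≠ 0 := by
    by_contra h
    push_neg at h
    exact hune (funext fun p => h p)
  have key : ∀ p : Fin 8, p ≠ m0 → e F p ∈ U := by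
    intro p hp
    obtain ⟨j, hj1, hj2⟩ := exists_third p m0
    have hv := step u huU m0 j (Ne.symm hj2)
    have hw2 := step _ hv j p hj1
    have ev1 : (u m0 • e F j - u j • e F m0) j = u m0 := by simp [e_apply, hj2]
    have ev2 : (u m0 • e F j - u j • e F m0) p = 0 := by simp [e_apply, hj1.symm, hp]
    rw [ev1, ev2] at hw2
    have h3 : u m0 • e F p ∈ U := by simpa using hw2
    have h4 := U.smul_mem (u m0)⁻¹ h3
    rwa [smul_smul, inv_mul_cancel₀ hm0, one_smul] at h4
  have keyall : ∀ p : Fin 8, e F p ∈ U := by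
    intro p
    by_cases hp : p = m0
    · subst hp
      obtain ⟨j, hj1, hj2⟩ := exists_third p p
      have h5 := step (e F j) (key j hj1) j p hj1
      simpa [e_apply, hj1.symm] using h5
    · exact key p hp
  rw [Submodule.eq_top_iff']
  intro z
  have hz : z = ∑ p : Fin 8, z p • e F p := by
    funext q
    rw [Finset.sum_apply]
    simp [e_apply]
  rw [hz]
  exact Submodule.sum_mem _ fun p _ => U.smul_mem _ (keyall p)

end Aux5
section Aux6
variable {F : Type*} [Field F] [CharZero F]

lemma delta_one_inj (w : Fin 4 → F) (h0 : w 0 ≠ 0) (h1 : w 1 ≠ 0) (h2 : w 2 ≠ 0)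
    (h3 : w 3 ≠ 0) (z : Fin 8 → F) (hz : delta F 1 w z = 0) : z = 0 := by
  have key : ∀ c : Fin 8, (delta F 1 w z) c = 0 := fun c => congrFun hz c
  have e2 := key 4
  have e4 := key 2
  have e3 := key 7
  have e7 := key 3
  have e5 := key 6
  have e6 := key 5
  have e0 := key 1
  have e1 := key 0
  simp only [delta, e, Pi.single_apply, show sh 1 1 = 2 from rfl, show sh 1 2 = 3 from rfl,
    show sh 1 3 = 4 from rfl, show sh 1 4 = 5 from rfl, show sh 1 5 = 6 from rfl,
    show sh 1 6 = 7 from rfl] at e2 e4 e3 e7 e5 e6 e0 e1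
  simp at e2 e4 e3 e7 e5 e6 e0 e1
  funext p
  fin_cases p
  · exact e0.resolve_left h3
  · exact e1.resolve_left h3
  · exact e2.resolve_left h0
  · exact e3.resolve_left h1
  · exact e4.resolve_left h0
  · exact e5.resolve_left h2
  · exact e6.resolve_left h2
  · exact e7.resolve_left h1
end Aux6
section Aux7
variable {F : Type*} [Field F] [CharZero F]

lemma delta_ker2 (w : Fin 4 → F) (hw : w 0 = 0) : delta F 1 w (e F 2) = 0 := by
  funext p
  simp [delta, e, Pi.single_apply, hw, show sh 1 1 = 2 from rfl, show sh 1 2 = 3 from rfl,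
    show sh 1 3 = 4 from rfl, show sh 1 4 = 5 from rfl, show sh 1 5 = 6 from rfl,
    show sh 1 6 = 7 from rfl]

lemma delta_ker0 (w : Fin 4 → F) (hw : w 3 = 0) : delta F 1 w (e F 0) = 0 := by
  funext p
  simp [delta, e, Pi.single_apply, hw, show sh 1 1 = 2 from rfl, show sh 1 2 = 3 from rfl,
    show sh 1 3 = 4 from rfl, show sh 1 4 = 5 from rfl, show sh 1 5 = 6 from rfl,
    show sh 1 6 = 7 from rfl]

lemma e_ne_zero (j : Fin 8) : e F j ≠ 0 := fun h => by
  have := congrFun h j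
  simp [e] at this

lemma distinguishes (k l : Fin 3) (v wk wl : Fin 4 → F)
    (hk : rhoFam F k (single F 1 v) = delta F 1 wk)
    (hl : rhoFam F l (single F 1 v) = delta F 1 wl)
    (h0 : wk 0 ≠ 0) (h1 : wk 1 ≠ 0) (h2 : wk 2 ≠ 0) (h3 : wk 3 ≠ 0)
    (j : Fin 8) (hker : delta F 1 wl (e F j) = 0)
    (T : (Fin 8 → F) ≃ₗ[F] (Fin 8 → F))
    (hT : ∀ x ∈ VGx F, ∀ z : Fin 8 → F, T (rhoFam F k x z) = rhoFam F l x (T z)) :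
    False := by
  have hx : single F 1 v ∈ VGx F := single_mem 1 (by decide) v
  have hT1 := hT _ hx (T.symm (e F j))
  rw [T.apply_symm_apply, hl, hker, hk] at hT1
  have h4 : delta F 1 wk (T.symm (e F j)) = 0 := by
    apply T.injective
    rw [hT1, map_zero]
  have h5 := delta_one_inj wk h0 h1 h2 h3 _ h4
  apply e_ne_zero (F := F) j
  rw [← T.apply_symm_apply (e F j), h5, map_zero]

end Aux7
/-- **Statement 12.** (F algebraically closed of characteristic 0.)  The three
`F⁸`-modules over `V^σ[G^×]` given by `ρ₁, ρ₂, ρ₃` are irreducible (the only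
submodules are `0` and `F⁸`) and pairwise non-equivalent. -/
theorem rho_irreducible_inequivalent [IsAlgClosed F] [CharZero F] :
    (∀ k : Fin 3, ∀ U : Submodule F (Fin 8 → F),
      (∀ x ∈ VGx F, ∀ u ∈ U, rhoFam F k x u ∈ U) → U = ⊥ ∨ U = ⊤) ∧
    (∀ k l : Fin 3, k ≠ l →
      ¬ ∃ T : (Fin 8 → F) ≃ₗ[F] (Fin 8 → F),
          ∀ x ∈ VGx F, ∀ z : Fin 8 → F, T (rhoFam F k x z) = rhoFam F l x (T z)) := by
  constructor
  · exact fun k U hU => irred k U hU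
  · intro k l hkl
    rintro ⟨T, hT⟩
    fin_cases k <;> fin_cases l
    · exact hkl rfl
    · -- k = 0, l = 1
      exact distinguishes 0 1 ![1,1,1,1] ![1,1,1,1] (c2 ![1,1,1,1])
        (by rw [rhoFam0, rho1_single 1 (by decide)])
        (by rw [rhoFam1, rho2_single 1 (by decide)])
        (by norm_num) (by norm_num) (by norm_num [Matrix.cons_val_two, Matrix.cons_val_three]) (by norm_num [Matrix.cons_val_two, Matrix.cons_val_three])
        2 (delta_ker2 _ (by norm_num [c2, Matrix.cons_val_two, Matrix.cons_val_three])) T hT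
    · -- k = 0, l = 2
      exact distinguishes 0 2 ![-1,-1,-1,-3] ![-1,-1,-1,-3] (c3 ![-1,-1,-1,-3])
        (by rw [rhoFam0, rho1_single 1 (by decide)])
        (by rw [rhoFam2, rho3_single 1 (by decide)])
        (by norm_num) (by norm_num) (by norm_num [Matrix.cons_val_two, Matrix.cons_val_three]) (by norm_num [Matrix.cons_val_two, Matrix.cons_val_three])
        0 (delta_ker0 _ (by norm_num [c3, Matrix.cons_val_two, Matrix.cons_val_three])) T hT
    · -- k = 1, l = 0
      exact distinguishes 1 0 ![0,1,1,1] (c2 ![0,1,1,1]) ![0,1,1,1]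
        (by rw [rhoFam1, rho2_single 1 (by decide)])
        (by rw [rhoFam0, rho1_single 1 (by decide)])
        (by norm_num [c2, Matrix.cons_val_two, Matrix.cons_val_three]) (by norm_num [c2, Matrix.cons_val_two, Matrix.cons_val_three]) (by norm_num [c2, Matrix.cons_val_two, Matrix.cons_val_three]) (by norm_num [c2, Matrix.cons_val_two, Matrix.cons_val_three])
        2 (delta_ker2 _ (by norm_num)) T hT
    · exact hkl rfl
    · -- k = 1, l = 2
      exact distinguishes 1 2 ![-1,-1,-1,-3] (c2 ![-1,-1,-1,-3]) (c3 ![-1,-1,-1,-3])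
        (by rw [rhoFam1, rho2_single 1 (by decide)])
        (by rw [rhoFam2, rho3_single 1 (by decide)])
        (by norm_num [c2, Matrix.cons_val_two, Matrix.cons_val_three]) (by norm_num [c2, Matrix.cons_val_two, Matrix.cons_val_three]) (by norm_num [c2, Matrix.cons_val_two, Matrix.cons_val_three]) (by norm_num [c2, Matrix.cons_val_two, Matrix.cons_val_three])
        0 (delta_ker0 _ (by norm_num [c3, Matrix.cons_val_two, Matrix.cons_val_three])) T hT
    · -- k = 2, l = 0
      exact distinguishes 2 0 ![0,1,1,1] (c3 ![0,1,1,1]) ![0,1,1,1]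
        (by rw [rhoFam2, rho3_single 1 (by decide)])
        (by rw [rhoFam0, rho1_single 1 (by decide)])
        (by norm_num [c3, Matrix.cons_val_two, Matrix.cons_val_three]) (by norm_num [c3, Matrix.cons_val_two, Matrix.cons_val_three]) (by norm_num [c3, Matrix.cons_val_two, Matrix.cons_val_three]) (by norm_num [c3, Matrix.cons_val_two, Matrix.cons_val_three])
        2 (delta_ker2 _ (by norm_num)) T hT
    · -- k = 2, l = 1
      exact distinguishes 2 1 ![1,1,1,1] (c3 ![1,1,1,1]) (c2 ![1,1,1,1])
        (by rw [rhoFam2, rho3_single 1 (by decide)])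
        (by rw [rhoFam1, rho2_single 1 (by decide)])
        (by norm_num [c3, Matrix.cons_val_two, Matrix.cons_val_three]) (by norm_num [c3, Matrix.cons_val_two, Matrix.cons_val_three]) (by norm_num [c3, Matrix.cons_val_two, Matrix.cons_val_three]) (by norm_num [c3, Matrix.cons_val_two, Matrix.cons_val_three])
        2 (delta_ker2 _ (by norm_num [c2, Matrix.cons_val_two, Matrix.cons_val_three])) T hT
    · exact hkl rfl

end
end GGA
end

section
/- Let G be an abelian group, F a field, and L a G-graded Lie algebra over F, i.e. L = ⊕_{g∈G} L_g with [L_g, L_h] ⊆ L_{g+h}. Let ε: G×G → F be any map, and let [·,·]^ε be the unique bilinear product on L with [x,y]^ε = ε(g,h)[x,y] for x ∈ L_g, y ∈ L_h. Then (L, [·,·]^ε) is a Lie algebra (i.e. ε is a graded contraction of the grading) if and only if for all g, h, k ∈ G and all x ∈ L_g, y ∈ L_h, z ∈ L_k: (a1) (ε(g,h) − ε(h,g))[x,y] = 0, and (a2) (ε(g,h,k) − ε(k,g,h))[x,[y,z]] + (ε(h,k,g) − ε(k,g,h))[y,[z,x]] = 0, where ε(g,h,k) := ε(g, h+k)ε(h,k).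 -/
namespace GGA

/-- **Statement 16.** Let `L = ⊕_{g ∈ G} L_g` be a `G`-graded Lie algebra over a field
`F`, `ε : G × G → F` any map, and `[·,·]^ε` the unique bilinear product with
`[x,y]^ε = ε(g,h)[x,y]` for homogeneous `x ∈ L_g`, `y ∈ L_h` (given here as a bilinear
map `B` with that property).  Then `(L, [·,·]^ε)` is a Lie algebra if and only if, for
all `g, h, k ∈ G` and homogeneous `x ∈ L_g`, `y ∈ L_h`, `z ∈ L_k`:
(a1) `(ε(g,h) − ε(h,g))[x,y] = 0`, and
(a2) `(ε(g,h,k) − ε(k,g,h))[x,[y,z]] + (ε(h,k,g) − ε(k,g,h))[y,[z,x]] = 0`,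
where `ε(g,h,k) := ε(g, h+k) ε(h,k)`. -/
theorem graded_contraction_criterion
    (F : Type*) [Field F] (G : Type*) [AddCommGroup G] [DecidableEq G]
    (L : Type*) [LieRing L] [LieAlgebra F L]
    (ℒ : G → Submodule F L) (hdecomp : DirectSum.IsInternal ℒ)
    (hgraded : ∀ g h : G, ∀ x ∈ ℒ g, ∀ y ∈ ℒ h, ⁅x, y⁆ ∈ ℒ (g + h))
    (ε : G → G → F) (B : L →ₗ[F] L →ₗ[F] L)
    (hB : ∀ g h : G, ∀ x ∈ ℒ g, ∀ y ∈ ℒ h, B x y = ε g h • ⁅x, y⁆) :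
    ((∀ x : L, B x x = 0) ∧
        ∀ x y z : L, B x (B y z) + B y (B z x) + B z (B x y) = 0)
      ↔ ((∀ g h : G, ∀ x ∈ ℒ g, ∀ y ∈ ℒ h, (ε g h - ε h g) • ⁅x, y⁆ = 0) ∧
          (∀ g h k : G, ∀ x ∈ ℒ g, ∀ y ∈ ℒ h, ∀ z ∈ ℒ k,
            (ε g (h + k) * ε h k - ε k (g + h) * ε g h) • ⁅x, ⁅y, z⁆⁆
              + (ε h (k + g) * ε k g - ε k (g + h) * ε g h) • ⁅y, ⁅z, x⁆⁆ = 0)) := by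
  have hind : ∀ (P : L → Prop), P 0 → (∀ a b, P a → P b → P (a + b)) →
      (∀ g, ∀ x ∈ ℒ g, P x) → ∀ x, P x := by
    intro P h0 hadd hmem x
    have hx : x ∈ ⨆ g, ℒ g := by
      rw [hdecomp.submodule_iSup_eq_top]; trivial
    exact Submodule.iSup_induction (motive := P) ℒ hx hmem h0 hadd
  have e1 : ∀ g h k : G, ∀ x ∈ ℒ g, ∀ y ∈ ℒ h, ∀ z ∈ ℒ k,
      B x (B y z) = (ε g (h + k) * ε h k) • ⁅x, ⁅y, z⁆⁆ := by
    intro g h k x hx y hy z hz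
    rw [hB h k y hy z hz, map_smul, hB g (h + k) x hx _ (hgraded h k y hy z hz),
      smul_smul, mul_comm]
  have hyx : ∀ x y : L, ⁅y, x⁆ = -⁅x, y⁆ := by
    intro x y; rw [← lie_skew x y, neg_neg]
  have hC : ∀ x y z : L, ⁅z, ⁅x, y⁆⁆ = -⁅x, ⁅y, z⁆⁆ - ⁅y, ⁅z, x⁆⁆ := by
    intro x y z
    rw [leibniz_lie z x y, hyx y ⁅z, x⁆, hyx y z, lie_neg]
    abel
  constructor
  · rintro ⟨h1, h2⟩
    have hskew : ∀ x y : L, B x y + B y x = 0 := by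
      intro x y
      have hq := h1 (x + y)
      simp only [map_add, LinearMap.add_apply, h1 x, h1 y, zero_add, add_zero] at hq
      linear_combination (norm := module) hq
    constructor
    · intro g h x hx y hy
      have hq := hskew x y
      rw [hB g h x hx y hy, hB h g y hy x hx, hyx x y] at hq
      linear_combination (norm := module) hq
    · intro g h k x hx y hy z hz
      have hq := h2 x y z
      rw [e1 g h k x hx y hy z hz, e1 h k g y hy z hz x hx, e1 k g h z hz x hx y hy,
        hC x y z] at hq
      linear_combination (norm := module) hq
  · rintro ⟨a1, a2⟩
    have hskew : ∀ x y : L, B x y + B y x = 0 := by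
      intro x
      refine hind (fun x => ∀ y, B x y + B y x = 0) (by simp) ?_ ?_ x
      · intro a b ha hb y
        simp only [map_add, LinearMap.add_apply]
        linear_combination (norm := module) ha y + hb y
      · intro g x hx
        refine hind (fun y => B x y + B y x = 0) (by simp) ?_ ?_
        · intro a b ha hb
          simp only [map_add, LinearMap.add_apply]
          linear_combination (norm := module) ha + hb
        · intro h y hy
          rw [hB g h x hx y hy, hB h g y hy x hx, hyx x y]
          linear_combination (norm := module) a1 g h x hx y hy
    constructor
    · refine hind (fun x => B x x = 0) (by simp) ?_ ?_
      · intro a b ha hb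
        simp only [map_add, LinearMap.add_apply]
        linear_combination (norm := module) ha + hb + hskew a b
      · intro g x hx
        rw [hB g g x hx x hx, lie_self, smul_zero]
    · have hhom : ∀ g h k : G, ∀ x ∈ ℒ g, ∀ y ∈ ℒ h, ∀ z ∈ ℒ k,
          B x (B y z) + B y (B z x) + B z (B x y) = 0 := by
        intro g h k x hx y hy z hz
        rw [e1 g h k x hx y hy z hz, e1 h k g y hy z hz x hx, e1 k g h z hz x hx y hy,
          hC x y z]
        linear_combination (norm := module) a2 g h k x hx y hy z hz
      intro x
      refine hind (fun x => ∀ y z, B x (B y z) + B y (B z x) + B z (B x y) = 0)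
        (by simp) ?_ ?_ x
      · intro a b ha hb y z
        simp only [map_add, LinearMap.add_apply]
        linear_combination (norm := module) ha y z + hb y z
      · intro g x hx
        refine hind (fun y => ∀ z, B x (B y z) + B y (B z x) + B z (B x y) = 0)
          (by simp) ?_ ?_
        · intro a b ha hb z
          simp only [map_add, LinearMap.add_apply]
          linear_combination (norm := module) ha z + hb z
        · intro h y hy
          refine hind (fun z => B x (B y z) + B y (B z x) + B z (B x y) = 0)
            (by simp) ?_ ?_
          · intro a b ha hb
            simp only [map_add, LinearMap.add_apply]
            linear_combination (norm := module) ha + hb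
          · intro k z hz
            exact hhom g h k x hx y hy z hz

end GGA
end

section
/- Let F be a field and L = ⊕_{g∈G} L_g a G-graded Lie algebra over F for G = (Z/2Z)^3, satisfying: (i) L_0 = 0 for the neutral element 0 of G; (ii) [L_g, L_h] = L_{g+h} for all distinct nonzero g, h ∈ G; (iii) whenever g, h, k generate G, there exist x ∈ L_g, y ∈ L_h, z ∈ L_k such that {[x,[y,z]], [y,[z,x]]} is linearly independent. Let ε: G×G → F be an admissible map, i.e. ε(g,g) = ε(0,g) = ε(g,0) = 0 for all g ∈ G. Then ε is a graded contraction of the grading (i.e. the product defined on homogeneous elements by [x,y]^ε = ε(g,h)[x,y] is a Lie bracket on L) if and only if: (a1)' ε(g,h) = ε(h,g) for all g, h ∈ G, and (a2)' ε(g,h+k)ε(h,k) = ε(k,g+h)ε(g,h) whenever g, h, k generate G. -/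
namespace GGA

private lemma zmod2_cases : ∀ a : ZMod 2, a = 0 ∨ a = 1 := by decide

private lemma G_add_self (v : Fin 3 → ZMod 2) : v + v = 0 := by
  funext i
  exact (by decide : ∀ a : ZMod 2, a + a = 0) (v i)

private lemma eq_of_add_eq_zero' {u v : Fin 3 → ZMod 2} (h : u + v = 0) : u = v := by
  calc u = u + (v + v) := by rw [G_add_self, add_zero]
  _ = (u + v) + v := by rw [add_assoc]
  _ = v := by rw [h, zero_add]

private lemma closure_eq_top (g h k : Fin 3 → ZMod 2)
    (hg : g ≠ 0) (hh : h ≠ 0) (hk : k ≠ 0)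
    (hgh : g ≠ h) (hgk : g ≠ k) (hhk : h ≠ k)
    (hsum : g + h + k ≠ 0) :
    AddSubgroup.closure ({g, h, k} : Set (Fin 3 → ZMod 2)) = ⊤ := by
  set φ : (Fin 3 → ZMod 2) → (Fin 3 → ZMod 2) := fun v => v 0 • g + v 1 • h + v 2 • k with hφ
  have hadd : ∀ u v, φ (u + v) = φ u + φ v := by
    intro u v
    simp only [hφ, Pi.add_apply, add_smul]
    abel
  have hker : ∀ v, φ v = 0 → v = 0 := by
    intro v hv
    rcases zmod2_cases (v 0) with h0 | h0 <;> rcases zmod2_cases (v 1) with h1 | h1 <;>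
      rcases zmod2_cases (v 2) with h2 | h2 <;>
      simp only [hφ, h0, h1, h2, zero_smul, one_smul, zero_add, add_zero] at hv
    · funext i; fin_cases i <;> assumption
    · exact absurd hv hk
    · exact absurd hv hh
    · exact absurd (eq_of_add_eq_zero' hv) hhk
    · exact absurd hv hg
    · exact absurd (eq_of_add_eq_zero' hv) hgk
    · exact absurd (eq_of_add_eq_zero' hv) hgh
    · exact absurd hv hsum
  have hinj : Function.Injective φ := by
    intro u v huv
    have h1 : φ (u + v) = 0 := by rw [hadd, huv, G_add_self]
    exact eq_of_add_eq_zero' (hker _ h1)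
  have hsurjφ : Function.Surjective φ := Finite.injective_iff_surjective.mp hinj
  rw [eq_top_iff]
  intro x _
  obtain ⟨v, rfl⟩ := hsurjφ x
  have hsm : ∀ (a : ZMod 2) (w : Fin 3 → ZMod 2),
      w ∈ AddSubgroup.closure ({g, h, k} : Set (Fin 3 → ZMod 2)) →
      a • w ∈ AddSubgroup.closure ({g, h, k} : Set (Fin 3 → ZMod 2)) := by
    intro a w hw
    rcases zmod2_cases a with ha | ha <;> subst ha
    · simpa using zero_mem _
    · simpa using hw
  have hgm : g ∈ AddSubgroup.closure ({g, h, k} : Set (Fin 3 → ZMod 2)) :=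
    AddSubgroup.subset_closure (by simp)
  have hhm : h ∈ AddSubgroup.closure ({g, h, k} : Set (Fin 3 → ZMod 2)) :=
    AddSubgroup.subset_closure (by simp)
  have hkm : k ∈ AddSubgroup.closure ({g, h, k} : Set (Fin 3 → ZMod 2)) :=
    AddSubgroup.subset_closure (by simp)
  exact add_mem (add_mem (hsm _ _ hgm) (hsm _ _ hhm)) (hsm _ _ hkm)

/-- **Statement 17.** Let `L = ⊕_{g ∈ G} L_g` be a `G`-graded Lie algebra over `F`, for
`G = (ℤ/2ℤ)³`, with (i) `L_0 = 0`; (ii) `[L_g, L_h] = L_{g+h}` for distinct nonzero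
`g, h`; (iii) whenever `g, h, k` generate `G` there are `x ∈ L_g`, `y ∈ L_h`, `z ∈ L_k`
with `{[x,[y,z]], [y,[z,x]]}` linearly independent.  Let `ε` be an admissible map,
i.e. `ε(g,g) = ε(0,g) = ε(g,0) = 0`.  Then `ε` is a graded contraction (the contracted
product `B` is a Lie bracket) if and only if
(a1)' `ε(g,h) = ε(h,g)` for all `g, h`, and
(a2)' `ε(g,h+k) ε(h,k) = ε(k,g+h) ε(g,h)` whenever `g, h, k` generate `G`. -/
theorem graded_contraction_criterion_admissible
    (F : Type*) [Field F] (L : Type*) [LieRing L] [LieAlgebra F L]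
    (ℒ : (Fin 3 → ZMod 2) → Submodule F L) (hdecomp : DirectSum.IsInternal ℒ)
    (hgraded : ∀ g h, ∀ x ∈ ℒ g, ∀ y ∈ ℒ h, ⁅x, y⁆ ∈ ℒ (g + h))
    (h0 : ℒ 0 = ⊥)
    (hsurj : ∀ g h : Fin 3 → ZMod 2, g ≠ 0 → h ≠ 0 → g ≠ h →
      Submodule.span F {z : L | ∃ x ∈ ℒ g, ∃ y ∈ ℒ h, z = ⁅x, y⁆} = ℒ (g + h))
    (hindep : ∀ g h k : Fin 3 → ZMod 2,
      AddSubgroup.closure ({g, h, k} : Set (Fin 3 → ZMod 2)) = ⊤ →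
      ∃ x ∈ ℒ g, ∃ y ∈ ℒ h, ∃ z ∈ ℒ k,
        LinearIndependent F ![⁅x, ⁅y, z⁆⁆, ⁅y, ⁅z, x⁆⁆])
    (ε : (Fin 3 → ZMod 2) → (Fin 3 → ZMod 2) → F)
    (hadm : ∀ g : Fin 3 → ZMod 2, ε g g = 0 ∧ ε 0 g = 0 ∧ ε g 0 = 0)
    (B : L →ₗ[F] L →ₗ[F] L)
    (hB : ∀ g h, ∀ x ∈ ℒ g, ∀ y ∈ ℒ h, B x y = ε g h • ⁅x, y⁆) :
    ((∀ x : L, B x x = 0) ∧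
        ∀ x y z : L, B x (B y z) + B y (B z x) + B z (B x y) = 0)
      ↔ ((∀ g h : Fin 3 → ZMod 2, ε g h = ε h g) ∧
          (∀ g h k : Fin 3 → ZMod 2,
            AddSubgroup.closure ({g, h, k} : Set (Fin 3 → ZMod 2)) = ⊤ →
            ε g (h + k) * ε h k = ε k (g + h) * ε g h)) := by
  have htop : ∀ x : L, x ∈ ⨆ g, ℒ g := by
    intro x
    rw [hdecomp.submodule_iSup_eq_top]
    exact Submodule.mem_top
  -- nonzero homogeneous components are nontrivial
  have hnonbot : ∀ m : Fin 3 → ZMod 2, m ≠ 0 → ℒ m ≠ ⊥ := by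
    intro m hm
    have key : ∀ a b : Fin 3 → ZMod 2,
        AddSubgroup.closure ({m, a, b} : Set (Fin 3 → ZMod 2)) = ⊤ → ℒ m ≠ ⊥ := by
      intro a b hcl hbot
      obtain ⟨x, hx, y, hy, z, hz, hli⟩ := hindep m a b hcl
      have hx0 : x = 0 := by rwa [hbot, Submodule.mem_bot] at hx
      have := hli.ne_zero 0
      simp [hx0] at this
    obtain ⟨i, hi⟩ := Function.ne_iff.mp hm
    have hi1 : m i = 1 := (zmod2_cases (m i)).resolve_left (by simpa using hi)
    fin_cases i
    · refine key ![0,1,0] ![0,0,1] (closure_eq_top _ _ _ hm (by decide) (by decide)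
        (fun he => by rw [he] at hi1; revert hi1; decide)
        (fun he => by rw [he] at hi1; revert hi1; decide) (by decide) ?_)
      intro hs
      have h00 := congrFun hs 0
      simp only [Pi.add_apply, Pi.zero_apply] at h00
      rw [show m 0 = 1 from hi1] at h00
      revert h00; decide
    · refine key ![1,0,0] ![0,0,1] (closure_eq_top _ _ _ hm (by decide) (by decide)
        (fun he => by rw [he] at hi1; revert hi1; decide)
        (fun he => by rw [he] at hi1; revert hi1; decide) (by decide) ?_)
      intro hs
      have h00 := congrFun hs 1
      simp only [Pi.add_apply, Pi.zero_apply] at h00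
      rw [show m 1 = 1 from hi1] at h00
      revert h00; decide
    · refine key ![1,0,0] ![0,1,0] (closure_eq_top _ _ _ hm (by decide) (by decide)
        (fun he => by rw [he] at hi1; revert hi1; decide)
        (fun he => by rw [he] at hi1; revert hi1; decide) (by decide) ?_)
      intro hs
      have h00 := congrFun hs 2
      simp only [Pi.add_apply, Pi.zero_apply] at h00
      rw [show m 2 = 1 from hi1] at h00
      revert h00; decide
  constructor
  · rintro ⟨halt, hjac⟩
    have hskew : ∀ x y : L, B x y + B y x = 0 := by
      intro x y
      have h := halt (x + y)
      simp only [map_add, LinearMap.add_apply, halt x, halt y, zero_add, add_zero] at h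
      rw [add_comm]
      exact h
    refine ⟨fun g h => ?_, fun g h k hcl => ?_⟩
    · by_cases hg : g = 0
      · subst hg; rw [(hadm h).2.1, (hadm h).2.2]
      by_cases hh : h = 0
      · subst hh; rw [(hadm g).2.2, (hadm g).2.1]
      by_cases hgh : g = h
      · rw [hgh]
      by_contra hne'
      have hall : ∀ x ∈ ℒ g, ∀ y ∈ ℒ h, ⁅x, y⁆ = (0 : L) := by
        intro x hx y hy
        have h1 := hskew x y
        rw [hB g h x hx y hy, hB h g y hy x hx, ← lie_skew y x, smul_neg,
          ← sub_eq_add_neg, ← sub_smul] at h1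
        rcases smul_eq_zero.mp h1 with h3 | h3
        · exact absurd (sub_eq_zero.mp h3) hne'
        · exact h3
      apply hnonbot (g + h) (fun hz => hgh (eq_of_add_eq_zero' hz))
      rw [← hsurj g h hg hh hgh]
      refine le_bot_iff.mp (Submodule.span_le.mpr ?_)
      rintro z ⟨x, hx, y, hy, rfl⟩
      simp [hall x hx y hy]
    · obtain ⟨x, hx, y, hy, z, hz, hli⟩ := hindep g h k hcl
      have hj := hjac x y z
      have e1 : B x (B y z) = (ε h k * ε g (h + k)) • ⁅x, ⁅y, z⁆⁆ := by
        rw [hB h k y hy z hz, map_smul, hB g (h + k) x hx _ (hgraded h k y hy z hz),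
          smul_smul]
      have e2 : B y (B z x) = (ε k g * ε h (k + g)) • ⁅y, ⁅z, x⁆⁆ := by
        rw [hB k g z hz x hx, map_smul, hB h (k + g) y hy _ (hgraded k g z hz x hx),
          smul_smul]
      have e3 : B z (B x y) = (ε g h * ε k (g + h)) • ⁅z, ⁅x, y⁆⁆ := by
        rw [hB g h x hx y hy, map_smul, hB k (g + h) z hz _ (hgraded g h x hx y hy),
          smul_smul]
      rw [e1, e2, e3] at hj
      have hzxy : ⁅z, ⁅x, y⁆⁆ = -(⁅x, ⁅y, z⁆⁆ + ⁅y, ⁅z, x⁆⁆) := by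
        rw [eq_neg_iff_add_eq_zero, add_comm]
        exact lie_jacobi x y z
      rw [hzxy, smul_neg, smul_add] at hj
      have hj' : (ε h k * ε g (h + k) - ε g h * ε k (g + h)) • ⁅x, ⁅y, z⁆⁆ +
          (ε k g * ε h (k + g) - ε g h * ε k (g + h)) • ⁅y, ⁅z, x⁆⁆ = 0 := by
        rw [sub_smul, sub_smul, ← hj]
        abel
      obtain ⟨ha, hb⟩ := LinearIndependent.pair_iff.mp hli _ _ hj'
      linear_combination ha
  · rintro ⟨hsym, ha2⟩
    have hCbase : ∀ g h, ∀ x ∈ ℒ g, ∀ y ∈ ℒ h, B x y + B y x = 0 := by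
      intro g h x hx y hy
      rw [hB g h x hx y hy, hB h g y hy x hx, hsym h g, ← lie_skew y x, smul_neg,
        add_neg_cancel]
    have hC1 : ∀ g, ∀ x ∈ ℒ g, ∀ y, B x y + B y x = 0 := by
      intro g x hx y
      refine Submodule.iSup_induction (motive := fun y => B x y + B y x = 0) ℒ (htop y)
        (fun h y hy => hCbase g h x hx y hy) (by simp) ?_
      intro y1 y2 h1 h2
      have h3 : B x (y1 + y2) + B (y1 + y2) x
          = (B x y1 + B y1 x) + (B x y2 + B y2 x) := by
        simp only [map_add, LinearMap.add_apply]
        abel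
      rw [h3, h1, h2, add_zero]
    have hC : ∀ x y : L, B x y + B y x = 0 := by
      intro x y
      refine Submodule.iSup_induction (motive := fun x => B x y + B y x = 0) ℒ (htop x)
        (fun g x hx => hC1 g x hx y) (by simp) ?_
      intro x1 x2 h1 h2
      have h3 : B (x1 + x2) y + B y (x1 + x2)
          = (B x1 y + B y x1) + (B x2 y + B y x2) := by
        simp only [map_add, LinearMap.add_apply]
        abel
      rw [h3, h1, h2, add_zero]
    have halt : ∀ x : L, B x x = 0 := by
      intro x
      refine Submodule.iSup_induction (motive := fun x => B x x = 0) ℒ (htop x) ?_ (by simp) ?_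
      · intro g x hx
        rw [hB g g x hx x hx, (hadm g).1, zero_smul]
      · intro a b h1 h2
        have h3 : B (a + b) (a + b) = B a a + (B a b + B b a) + B b b := by
          simp only [map_add, LinearMap.add_apply]
          abel
        rw [h3, h1, h2, hC, add_zero, add_zero]
    have hJbase : ∀ g h k, ∀ x ∈ ℒ g, ∀ y ∈ ℒ h, ∀ z ∈ ℒ k,
        B x (B y z) + B y (B z x) + B z (B x y) = 0 := by
      intro g h k x hx y hy z hz
      have e1 : B x (B y z) = (ε h k * ε g (h + k)) • ⁅x, ⁅y, z⁆⁆ := by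
        rw [hB h k y hy z hz, map_smul, hB g (h + k) x hx _ (hgraded h k y hy z hz),
          smul_smul]
      have e2 : B y (B z x) = (ε k g * ε h (k + g)) • ⁅y, ⁅z, x⁆⁆ := by
        rw [hB k g z hz x hx, map_smul, hB h (k + g) y hy _ (hgraded k g z hz x hx),
          smul_smul]
      have e3 : B z (B x y) = (ε g h * ε k (g + h)) • ⁅z, ⁅x, y⁆⁆ := by
        rw [hB g h x hx y hy, map_smul, hB k (g + h) z hz _ (hgraded g h x hx y hy),
          smul_smul]
      rw [e1, e2, e3]
      by_cases hg : g = 0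
      · have hx0 : x = 0 := by rw [hg, h0, Submodule.mem_bot] at hx; exact hx
        simp [hx0]
      by_cases hh : h = 0
      · have hy0 : y = 0 := by rw [hh, h0, Submodule.mem_bot] at hy; exact hy
        simp [hy0]
      by_cases hk : k = 0
      · have hz0 : z = 0 := by rw [hk, h0, Submodule.mem_bot] at hz; exact hz
        simp [hz0]
      by_cases hgh : g = h
      · obtain rfl := hgh
        have hxy : ⁅x, y⁆ = (0 : L) := by
          have hm := hgraded g g x hx y hy
          rwa [G_add_self, h0, Submodule.mem_bot] at hm
        have hUV : ⁅y, ⁅z, x⁆⁆ = -⁅x, ⁅y, z⁆⁆ := by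
          have hjz := lie_jacobi x y z
          rw [hxy, lie_zero, add_zero] at hjz
          exact eq_neg_of_add_eq_zero_right hjz
        rw [hxy, lie_zero, smul_zero, add_zero, hUV, smul_neg, hsym k g, add_comm k g,
          add_neg_cancel]
      by_cases hgk : g = k
      · obtain rfl := hgk
        have hzx : ⁅z, x⁆ = (0 : L) := by
          have hm := hgraded g g z hz x hx
          rwa [G_add_self, h0, Submodule.mem_bot] at hm
        have hW : ⁅z, ⁅x, y⁆⁆ = -⁅x, ⁅y, z⁆⁆ := by
          have hjz := lie_jacobi x y z
          rw [hzx, lie_zero, add_zero] at hjz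
          exact eq_neg_of_add_eq_zero_right hjz
        rw [hzx, lie_zero, smul_zero, add_zero, hW, smul_neg, hsym h g, add_comm h g,
          add_neg_cancel]
      by_cases hhk : h = k
      · obtain rfl := hhk
        have hyz : ⁅y, z⁆ = (0 : L) := by
          have hm := hgraded h h y hy z hz
          rwa [G_add_self, h0, Submodule.mem_bot] at hm
        have hW : ⁅z, ⁅x, y⁆⁆ = -⁅y, ⁅z, x⁆⁆ := by
          have hjz := lie_jacobi x y z
          rw [hyz, lie_zero, zero_add] at hjz
          exact eq_neg_of_add_eq_zero_right hjz
        rw [hyz, lie_zero, smul_zero, zero_add, hW, smul_neg, hsym g h, add_comm g h,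
          add_neg_cancel]
      by_cases hsum : g + h + k = 0
      · have hg1 : g = h + k := eq_of_add_eq_zero' (by rw [← add_assoc]; exact hsum)
        have hh1 : h = k + g := eq_of_add_eq_zero'
          (by rw [show h + (k + g) = g + h + k by abel]; exact hsum)
        have hk1 : k = g + h := eq_of_add_eq_zero'
          (by rw [show k + (g + h) = g + h + k by abel]; exact hsum)
        rw [← hg1, ← hh1, ← hk1, (hadm g).1, (hadm h).1, (hadm k).1]
        simp
      have hcl := closure_eq_top g h k hg hh hk hgh hgk hhk hsum
      have q1 := ha2 g h k hcl
      have hset : ({h, k, g} : Set (Fin 3 → ZMod 2)) = {g, h, k} := by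
        ext w; simp only [Set.mem_insert_iff, Set.mem_singleton_iff]; tauto
      have q2 := ha2 h k g (by rw [hset]; exact hcl)
      have hab : ε k g * ε h (k + g) = ε h k * ε g (h + k) := by linear_combination q2
      have hcb : ε g h * ε k (g + h) = ε h k * ε g (h + k) := by linear_combination -q1
      rw [hab, hcb, ← smul_add, ← smul_add, lie_jacobi, smul_zero]
    have hJ1 : ∀ g h, ∀ x ∈ ℒ g, ∀ y ∈ ℒ h, ∀ z : L,
        B x (B y z) + B y (B z x) + B z (B x y) = 0 := by
      intro g h x hx y hy z
      refine Submodule.iSup_induction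
        (motive := fun z => B x (B y z) + B y (B z x) + B z (B x y) = 0) ℒ (htop z)
        (fun k z hz => hJbase g h k x hx y hy z hz) (by simp) ?_
      intro z1 z2 h1 h2
      have h3 : B x (B y (z1 + z2)) + B y (B (z1 + z2) x) + B (z1 + z2) (B x y)
          = (B x (B y z1) + B y (B z1 x) + B z1 (B x y))
            + (B x (B y z2) + B y (B z2 x) + B z2 (B x y)) := by
        simp only [map_add, LinearMap.add_apply]
        abel
      rw [h3, h1, h2, add_zero]
    have hJ2 : ∀ g, ∀ x ∈ ℒ g, ∀ y z : L,
        B x (B y z) + B y (B z x) + B z (B x y) = 0 := by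
      intro g x hx y z
      refine Submodule.iSup_induction
        (motive := fun y => B x (B y z) + B y (B z x) + B z (B x y) = 0) ℒ (htop y)
        (fun h y hy => hJ1 g h x hx y hy z) (by simp) ?_
      intro y1 y2 h1 h2
      have h3 : B x (B (y1 + y2) z) + B (y1 + y2) (B z x) + B z (B x (y1 + y2))
          = (B x (B y1 z) + B y1 (B z x) + B z (B x y1))
            + (B x (B y2 z) + B y2 (B z x) + B z (B x y2)) := by
        simp only [map_add, LinearMap.add_apply]
        abel
      rw [h3, h1, h2, add_zero]
    refine ⟨halt, fun x y z => ?_⟩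
    refine Submodule.iSup_induction
      (motive := fun x => B x (B y z) + B y (B z x) + B z (B x y) = 0) ℒ (htop x)
      (fun g x hx => hJ2 g x hx y z) (by simp) ?_
    intro x1 x2 h1 h2
    have h3 : B (x1 + x2) (B y z) + B y (B z (x1 + x2)) + B z (B (x1 + x2) y)
        = (B x1 (B y z) + B y (B z x1) + B z (B x1 y))
          + (B x2 (B y z) + B y (B z x2) + B z (B x2 y)) := by
      simp only [map_add, LinearMap.add_apply]
      abel
    rw [h3, h1, h2, add_zero]

end GGA
end
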